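/- Let V be a type and let d : V → V → ℝ satisfy the directed triangle inequality d(a,c) ≤ d(a,b) + d(b,c) for all a,b,c ∈ V. Let k be a real number with k ≥ 1. If vertices u, v, r ∈ V satisfy k·d(v,r) + d(r,u) ≤ k·d(v,u) + (k−1)·d(u,r), then d(r,u) + d(u,r) ≤ k·(d(u,v) + d(v,u)). -/
import Mathlib


/-- Generalized key observation (Lemma 5.6): for real `k ≥ 1`, if
`k·d(v,r) + d(r,u) ≤ k·d(v,u) + (k−1)·d(u,r)`, then `d(r⇌u) ≤ k·d(u⇌v)`. -/
theorem generalized_key_observation {V : Type*} (d : V → V → ℝ)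
    (htri : ∀ a b c : V, d a c ≤ d a b + d b c)
    (k : ℝ) (hk : 1 ≤ k)
    (u v r : V)
    (h : k * d v r + d r u ≤ k * d v u + (k - 1) * d u r) :
    d r u + d u r ≤ k * (d u v + d v u) := by
  nlinarith [htri u v r, mul_le_mul_of_nonneg_left (htri u v r) (by linarith : (0:ℝ) ≤ k)]
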